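/- Let n ≥ 2 be an integer. Let F : ℝⁿ → ℝⁿ be differentiable everywhere with Jacobian J(x), let x* ∈ ℝⁿ satisfy F(x*) = 0 with J* := J(x*) invertible and c := ‖J*⁻¹‖, and suppose ‖J(x) − J(x*)‖ ≤ M‖x − x*‖ for all x ∈ ℝⁿ, where M > 0. Let x_k ∈ ℝⁿ, B_k ∈ ℝ^{n×n} be generated by the greedy Broyden's method with each B_k invertible. If 48√n c M ‖x₀ − x*‖ + c‖B₀ − J(x₀)‖_F ≤ 1/3, then for all k ≥ 1, ‖x_k − x*‖ ≤ e^k·(1 − 1/n)^{k(k−1)/4}·‖x₀ − x*‖. -/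

import Mathlib

open Matrix

noncomputable def vecNorm {n : ℕ} (u : Fin n → ℝ) : ℝ := Real.sqrt (∑ i, u i ^ 2)

noncomputable def frobNorm {n : ℕ} (M : Matrix (Fin n) (Fin n) ℝ) : ℝ :=
  Real.sqrt (∑ i, ∑ j, M i j ^ 2)

noncomputable def specNorm {n : ℕ} (M : Matrix (Fin n) (Fin n) ℝ) : ℝ :=
  sSup {r : ℝ | ∃ u : Fin n → ℝ, vecNorm u = 1 ∧ r = vecNorm (M.mulVec u)}

noncomputable def broyd {n : ℕ} (B A : Matrix (Fin n) (Fin n) ℝ) (u : Fin n → ℝ) :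
    Matrix (Fin n) (Fin n) ℝ :=
  B + (∑ i, u i ^ 2)⁻¹ • ((A - B) * Matrix.vecMulVec u u)

noncomputable def matCLM {n : ℕ} (M : Matrix (Fin n) (Fin n) ℝ) :
    (Fin n → ℝ) →L[ℝ] (Fin n → ℝ) :=
  LinearMap.toContinuousLinearMap M.mulVecLin

/-! ### Auxiliary material -/

noncomputable def EL (n : ℕ) : EuclideanSpace ℝ (Fin n) ≃L[ℝ] (Fin n → ℝ) :=
  PiLp.continuousLinearEquiv 2 ℝ (fun _ : Fin n => ℝ)

lemma vecNorm_eq {n : ℕ} (u : Fin n → ℝ) : vecNorm u = ‖(EL n).symm u‖ := by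
  rw [EuclideanSpace.norm_eq]; simp only [Real.norm_eq_abs, sq_abs]; rfl

lemma vecNorm_nonneg {n : ℕ} (u : Fin n → ℝ) : 0 ≤ vecNorm u := Real.sqrt_nonneg _

lemma vecNorm_add_le {n : ℕ} (u v : Fin n → ℝ) : vecNorm (u + v) ≤ vecNorm u + vecNorm v := by
  simp only [vecNorm_eq, map_add]; exact norm_add_le _ _

lemma vecNorm_neg {n : ℕ} (u : Fin n → ℝ) : vecNorm (-u) = vecNorm u := by
  simp only [vecNorm_eq, map_neg, norm_neg]

lemma vecNorm_smul {n : ℕ} (t : ℝ) (u : Fin n → ℝ) : vecNorm (t • u) = |t| * vecNorm u := by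
  simp only [vecNorm_eq, _root_.map_smul]; rw [norm_smul, Real.norm_eq_abs]

lemma vecNorm_single {n : ℕ} (i : Fin n) : vecNorm (Pi.single i 1 : Fin n → ℝ) = 1 := by
  unfold vecNorm
  have h : (∑ j, (Pi.single i 1 : Fin n → ℝ) j ^ 2) = 1 := by
    rw [Finset.sum_eq_single i]
    · simp
    · intro b _ hb; simp [Pi.single_apply, hb]
    · intro h; exact absurd (Finset.mem_univ i) h
  rw [h, Real.sqrt_one]

lemma sq_vecNorm {n : ℕ} (u : Fin n → ℝ) : vecNorm u ^ 2 = ∑ i, u i ^ 2 :=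
  Real.sq_sqrt (Finset.sum_nonneg fun _ _ => sq_nonneg _)

lemma vecNorm_mulVec_le_frob {n : ℕ} (A : Matrix (Fin n) (Fin n) ℝ) (v : Fin n → ℝ) :
    vecNorm (A.mulVec v) ≤ frobNorm A * vecNorm v := by
  have h1 : ∀ i, (A.mulVec v i) ^ 2 ≤ (∑ j, A i j ^ 2) * ∑ j, v j ^ 2 := by
    intro i
    have he : A.mulVec v i = ∑ j, A i j * v j := rfl
    rw [he]
    exact Finset.sum_mul_sq_le_sq_mul_sq _ _ _
  have h2 : (∑ i, A.mulVec v i ^ 2) ≤ (∑ i, ∑ j, A i j ^ 2) * ∑ j, v j ^ 2 := by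
    rw [Finset.sum_mul]
    exact Finset.sum_le_sum fun i _ => h1 i
  unfold vecNorm frobNorm
  calc Real.sqrt (∑ i, A.mulVec v i ^ 2)
      ≤ Real.sqrt ((∑ i, ∑ j, A i j ^ 2) * ∑ j, v j ^ 2) := Real.sqrt_le_sqrt h2
    _ = _ := Real.sqrt_mul (Finset.sum_nonneg fun _ _ => Finset.sum_nonneg fun _ _ => sq_nonneg _) _

lemma mulVec_mem_bddAbove {n : ℕ} (A : Matrix (Fin n) (Fin n) ℝ) :
    BddAbove {r : ℝ | ∃ u : Fin n → ℝ, vecNorm u = 1 ∧ r = vecNorm (A.mulVec u)} := by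
  refine ⟨frobNorm A, ?_⟩
  rintro r ⟨u, hu, rfl⟩
  calc vecNorm (A.mulVec u) ≤ frobNorm A * vecNorm u := vecNorm_mulVec_le_frob A u
    _ = frobNorm A := by rw [hu, mul_one]

lemma le_specNorm {n : ℕ} (A : Matrix (Fin n) (Fin n) ℝ) (u : Fin n → ℝ) (hu : vecNorm u = 1) :
    vecNorm (A.mulVec u) ≤ specNorm A :=
  le_csSup (mulVec_mem_bddAbove A) ⟨u, hu, rfl⟩

lemma specNorm_nonneg {n : ℕ} (hn : 0 < n) (A : Matrix (Fin n) (Fin n) ℝ) : 0 ≤ specNorm A :=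
  le_trans (vecNorm_nonneg _) (le_specNorm A (Pi.single ⟨0, hn⟩ 1) (vecNorm_single _))

lemma vecNorm_mulVec_le_spec {n : ℕ} (A : Matrix (Fin n) (Fin n) ℝ) (v : Fin n → ℝ) :
    vecNorm (A.mulVec v) ≤ specNorm A * vecNorm v := by
  rcases eq_or_ne (vecNorm v) 0 with h | h
  · have hv : v = 0 := by
      have h0 := (Real.sqrt_eq_zero (Finset.sum_nonneg fun _ _ => sq_nonneg _)).mp h
      funext i
      have := (Finset.sum_eq_zero_iff_of_nonneg (fun i _ => sq_nonneg (v i))).mp h0 i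
        (Finset.mem_univ i)
      exact pow_eq_zero_iff two_ne_zero |>.mp this
    subst hv
    rw [h, mul_zero]
    simp only [Matrix.mulVec_zero]
    simp [vecNorm]
  · have hvpos : 0 < vecNorm v := lt_of_le_of_ne (vecNorm_nonneg v) (Ne.symm h)
    set t := (vecNorm v)⁻¹
    have hu : vecNorm (t • v) = 1 := by
      rw [vecNorm_smul, abs_of_pos (inv_pos.mpr hvpos), inv_mul_cancel₀ (ne_of_gt hvpos)]
    have h2 := le_specNorm A (t • v) hu
    rw [Matrix.mulVec_smul, vecNorm_smul, abs_of_pos (inv_pos.mpr hvpos)] at h2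
    calc vecNorm (A.mulVec v) = vecNorm v * ((vecNorm v)⁻¹ * vecNorm (A.mulVec v)) := by
          field_simp
      _ ≤ vecNorm v * specNorm A := mul_le_mul_of_nonneg_left h2 (le_of_lt hvpos)
      _ = specNorm A * vecNorm v := mul_comm _ _

noncomputable def FE {n : ℕ} (M : Matrix (Fin n) (Fin n) ℝ) : EuclideanSpace ℝ (Fin n × Fin n) :=
  (WithLp.equiv 2 (Fin n × Fin n → ℝ)).symm (fun p => M p.1 p.2)

lemma frobNorm_eq {n : ℕ} (M : Matrix (Fin n) (Fin n) ℝ) : frobNorm M = ‖FE M‖ := by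
  rw [EuclideanSpace.norm_eq]
  unfold frobNorm
  congr 1
  have h := Fintype.sum_prod_type (f := fun p : Fin n × Fin n => ‖FE M p‖ ^ 2)
  rw [h]
  apply Finset.sum_congr rfl
  intro a _
  apply Finset.sum_congr rfl
  intro b _
  have : ‖FE M (a, b)‖ = |M a b| := rfl
  rw [this, sq_abs]

lemma FE_add {n : ℕ} (A B : Matrix (Fin n) (Fin n) ℝ) : FE (A + B) = FE A + FE B := rfl

lemma frobNorm_nonneg {n : ℕ} (A : Matrix (Fin n) (Fin n) ℝ) : 0 ≤ frobNorm A :=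
  Real.sqrt_nonneg _

lemma frobNorm_add_le {n : ℕ} (A B : Matrix (Fin n) (Fin n) ℝ) :
    frobNorm (A + B) ≤ frobNorm A + frobNorm B := by
  simp only [frobNorm_eq, FE_add]; exact norm_add_le _ _

lemma frobNorm_neg {n : ℕ} (A : Matrix (Fin n) (Fin n) ℝ) : frobNorm (-A) = frobNorm A := by
  unfold frobNorm; congr 1; apply Finset.sum_congr rfl; intros; apply Finset.sum_congr rfl; intros
  simp [neg_pow]

lemma frobNorm_sub_rev {n : ℕ} (A B : Matrix (Fin n) (Fin n) ℝ) :
    frobNorm (A - B) = frobNorm (B - A) := by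
  rw [← frobNorm_neg (A - B), neg_sub]

lemma frobNorm_triangle {n : ℕ} (X Y Z : Matrix (Fin n) (Fin n) ℝ) :
    frobNorm (X - Z) ≤ frobNorm (X - Y) + frobNorm (Y - Z) := by
  have h : X - Z = (X - Y) + (Y - Z) := by abel
  rw [h]; exact frobNorm_add_le _ _

lemma sq_frobNorm {n : ℕ} (A : Matrix (Fin n) (Fin n) ℝ) :
    frobNorm A ^ 2 = ∑ i, ∑ j, A i j ^ 2 :=
  Real.sq_sqrt (Finset.sum_nonneg fun _ _ => Finset.sum_nonneg fun _ _ => sq_nonneg _)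

lemma colVec_single {n : ℕ} (A : Matrix (Fin n) (Fin n) ℝ) (j : Fin n) :
    A.mulVec (Pi.single j 1) = fun i => A i j := by
  funext i
  have h : A.mulVec (Pi.single j 1) i = ∑ r, A i r * (Pi.single j 1 : Fin n → ℝ) r := rfl
  rw [h, Finset.sum_eq_single j]
  · simp
  · intro b _ hb; simp [Pi.single_apply, hb]
  · intro h; exact absurd (Finset.mem_univ j) h

lemma frobNorm_le_sqrt_n_specNorm {n : ℕ} (hn : 0 < n) (A : Matrix (Fin n) (Fin n) ℝ) :
    frobNorm A ≤ Real.sqrt n * specNorm A := by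
  have hcol : ∀ j, ∑ i, A i j ^ 2 ≤ specNorm A ^ 2 := by
    intro j
    have h1 := le_specNorm A (Pi.single j 1) (vecNorm_single j)
    have h2 : vecNorm (A.mulVec (Pi.single j 1)) ^ 2 = ∑ i, A i j ^ 2 := by
      rw [sq_vecNorm, colVec_single]
    rw [← h2]
    exact pow_le_pow_left₀ (vecNorm_nonneg _) h1 2
  have hfa : frobNorm A ^ 2 ≤ n * specNorm A ^ 2 := by
    rw [sq_frobNorm, Finset.sum_comm]
    calc (∑ j, ∑ i, A i j ^ 2) ≤ ∑ _j : Fin n, specNorm A ^ 2 :=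
          Finset.sum_le_sum fun j _ => hcol j
      _ = n * specNorm A ^ 2 := by
          rw [Finset.sum_const, Finset.card_univ, Fintype.card_fin, nsmul_eq_mul]
  nlinarith [frobNorm_nonneg A, Real.sq_sqrt (Nat.cast_nonneg n : (0:ℝ) ≤ n),
    Real.sqrt_nonneg (n : ℝ), specNorm_nonneg hn A,
    mul_nonneg (Real.sqrt_nonneg (n:ℝ)) (specNorm_nonneg hn A)]

lemma broyd_entry {n : ℕ} (Bm A : Matrix (Fin n) (Fin n) ℝ) (i : Fin n) (p q : Fin n) :
    (broyd Bm A (Pi.single i 1)) p q = if q = i then A p q else Bm p q := by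
  have hsum : (∑ j, (Pi.single i 1 : Fin n → ℝ) j ^ 2) = 1 := by
    rw [Finset.sum_eq_single i]
    · simp
    · intro b _ hb; simp [Pi.single_apply, hb]
    · intro h; exact absurd (Finset.mem_univ i) h
  have hmul : ((A - Bm) * Matrix.vecMulVec (Pi.single i 1) (Pi.single i 1)
        : Matrix (Fin n) (Fin n) ℝ) p q
      = (A - Bm) p i * (Pi.single i 1 : Fin n → ℝ) q := by
    have hh : ((A - Bm) * Matrix.vecMulVec (Pi.single i 1) (Pi.single i 1)
          : Matrix (Fin n) (Fin n) ℝ) p q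
        = ∑ r, (A - Bm) p r * ((Pi.single i 1 : Fin n → ℝ) r * (Pi.single i 1 : Fin n → ℝ) q) := by
      rw [Matrix.mul_apply]
      apply Finset.sum_congr rfl
      intro r _
      rw [Matrix.vecMulVec_apply]
    rw [hh, Finset.sum_eq_single i]
    · simp
    · intro b _ hb; simp [Pi.single_apply, hb]
    · intro h; exact absurd (Finset.mem_univ i) h
  unfold broyd
  rw [Matrix.add_apply, Matrix.smul_apply, hmul, hsum]
  rcases eq_or_ne q i with h | h
  · subst h; simp [Pi.single_apply, Matrix.sub_apply]
  · simp [Pi.single_apply, h]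

lemma broyd_frob_sq {n : ℕ} (Bm A : Matrix (Fin n) (Fin n) ℝ) (i : Fin n) :
    frobNorm (broyd Bm A (Pi.single i 1) - A) ^ 2
      = frobNorm (Bm - A) ^ 2 - ∑ p, (Bm - A) p i ^ 2 := by
  rw [sq_frobNorm, sq_frobNorm]
  rw [Finset.sum_comm (f := fun p q => (broyd Bm A (Pi.single i 1) - A) p q ^ 2),
      Finset.sum_comm (f := fun p q => (Bm - A) p q ^ 2)]
  rw [← Finset.sum_erase_add _ _ (Finset.mem_univ i),
      ← Finset.sum_erase_add (f := fun q => ∑ p, (Bm - A) p q ^ 2) _ (Finset.mem_univ i)]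
  have h1 : ∑ q ∈ Finset.univ.erase i, ∑ p, (broyd Bm A (Pi.single i 1) - A) p q ^ 2
      = ∑ q ∈ Finset.univ.erase i, ∑ p, (Bm - A) p q ^ 2 := by
    apply Finset.sum_congr rfl
    intro q hq
    apply Finset.sum_congr rfl
    intro p _
    rw [Matrix.sub_apply, Matrix.sub_apply, broyd_entry, if_neg (Finset.ne_of_mem_erase hq)]
  have h2 : ∑ p, (broyd Bm A (Pi.single i 1) - A) p i ^ 2 = 0 := by
    apply Finset.sum_eq_zero
    intro p _
    rw [Matrix.sub_apply, broyd_entry, if_pos rfl, sub_self]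
    ring
  rw [h1, h2]
  ring

lemma matCLM_apply {n : ℕ} (A : Matrix (Fin n) (Fin n) ℝ) (v : Fin n → ℝ) :
    matCLM A v = A.mulVec v := rfl

lemma mvt_bound {n : ℕ}
    (F : (Fin n → ℝ) → (Fin n → ℝ)) (J : (Fin n → ℝ) → Matrix (Fin n) (Fin n) ℝ)
    (hF : ∀ x, HasFDerivAt F (matCLM (J x)) x)
    (xs : Fin n → ℝ) (hxs : F xs = 0) (M : ℝ) (hM : 0 < M)
    (hLip : ∀ x, specNorm (J x - J xs) ≤ M * vecNorm (x - xs)) (p : Fin n → ℝ) :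
    vecNorm (F p - (J xs).mulVec (p - xs)) ≤ M * vecNorm (p - xs) * vecNorm (p - xs) := by
  set L := EL n with hL
  set a := L.symm xs with ha
  set b := L.symm p with hb
  set G : EuclideanSpace ℝ (Fin n) → EuclideanSpace ℝ (Fin n) := fun y => L.symm (F (L y)) with hG
  set G' : EuclideanSpace ℝ (Fin n) → (EuclideanSpace ℝ (Fin n) →L[ℝ] EuclideanSpace ℝ (Fin n)) :=
    fun y => ((L.symm : (Fin n → ℝ) →L[ℝ] EuclideanSpace ℝ (Fin n)).comp
      ((matCLM (J (L y))).comp (L : EuclideanSpace ℝ (Fin n) →L[ℝ] (Fin n → ℝ)))) with hG'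
  have hGd : ∀ y, HasFDerivAt G (G' y) y := by
    intro y
    have h1 : HasFDerivAt (fun z : EuclideanSpace ℝ (Fin n) => F (L z))
        ((matCLM (J (L y))).comp (L : EuclideanSpace ℝ (Fin n) →L[ℝ] (Fin n → ℝ))) y :=
      (hF (L y)).comp y (L.hasFDerivAt)
    exact ((L.symm : (Fin n → ℝ) →L[ℝ] EuclideanSpace ℝ (Fin n)).hasFDerivAt).comp y h1
  have hseg : ∀ z ∈ segment ℝ a b, ‖z - a‖ ≤ ‖b - a‖ := by
    intro z hz
    rw [segment_eq_image'] at hz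
    obtain ⟨t, ht, rfl⟩ := hz
    simp only [add_sub_cancel_left]
    rw [norm_smul, Real.norm_eq_abs, abs_of_nonneg ht.1]
    exact mul_le_of_le_one_left (norm_nonneg _) ht.2
  have hLz : ∀ z : EuclideanSpace ℝ (Fin n), (L z : Fin n → ℝ) - xs = L (z - a) := by
    intro z
    rw [ha, map_sub, L.apply_symm_apply]
  have hnormL : ∀ w : Fin n → ℝ, vecNorm w = ‖L.symm w‖ := vecNorm_eq
  have hnormL' : ∀ z : EuclideanSpace ℝ (Fin n), vecNorm (L z) = ‖z‖ := by
    intro z; rw [hnormL, L.symm_apply_apply]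
  have hLa : (L a : Fin n → ℝ) = xs := L.apply_symm_apply xs
  have hLb : (L b : Fin n → ℝ) = p := L.apply_symm_apply p
  have hba : vecNorm (p - xs) = ‖b - a‖ := by rw [← hLb, hLz b, hnormL']
  have hbound : ∀ z ∈ segment ℝ a b, ‖G' z - G' a‖ ≤ M * vecNorm (p - xs) := by
    intro z hz
    apply ContinuousLinearMap.opNorm_le_bound _
      (mul_nonneg (le_of_lt hM) (vecNorm_nonneg _))
    intro v
    have he : (G' z - G' a) v = L.symm ((J (L z) - J xs).mulVec (L v)) := by
      simp only [hG', ContinuousLinearMap.sub_apply, ContinuousLinearMap.comp_apply,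
        matCLM_apply, ContinuousLinearEquiv.coe_coe, hLa]
      rw [Matrix.sub_mulVec, map_sub]
    rw [he, ← hnormL]
    calc vecNorm ((J (L z) - J xs).mulVec (L v))
        ≤ specNorm (J (L z) - J xs) * vecNorm (L v) := vecNorm_mulVec_le_spec _ _
      _ ≤ (M * vecNorm ((L z : Fin n → ℝ) - xs)) * ‖v‖ := by
          rw [hnormL' v]
          exact mul_le_mul_of_nonneg_right (hLip (L z)) (norm_nonneg _)
      _ ≤ M * vecNorm (p - xs) * ‖v‖ := by
          apply mul_le_mul_of_nonneg_right _ (norm_nonneg _)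
          apply mul_le_mul_of_nonneg_left _ (le_of_lt hM)
          rw [hLz z, hnormL', hba]
          exact hseg z hz
  have hmvt := Convex.norm_image_sub_le_of_norm_hasFDerivWithin_le'
    (f := G) (f' := G') (φ := G' a) (C := M * vecNorm (p - xs)) (s := segment ℝ a b)
    (fun z hz => (hGd z).hasFDerivWithinAt) hbound (convex_segment a b)
    (left_mem_segment ℝ a b) (right_mem_segment ℝ a b)
  have hGb : G b = L.symm (F p) := by rw [hG]; simp only [hb, L.apply_symm_apply]
  have hGa : G a = 0 := by
    rw [hG]; simp only [ha, L.apply_symm_apply, hxs, map_zero]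
  have hφ : (G' a) (b - a) = L.symm ((J xs).mulVec (p - xs)) := by
    simp only [hG', ContinuousLinearMap.comp_apply, matCLM_apply,
      ContinuousLinearEquiv.coe_coe, hLa]
    rw [← hLz b, hLb]
  rw [hGb, hGa, hφ, sub_zero] at hmvt
  rw [← map_sub] at hmvt
  rw [hnormL]
  calc ‖L.symm (F p - (J xs).mulVec (p - xs))‖ ≤ M * vecNorm (p - xs) * ‖b - a‖ := hmvt
    _ = M * vecNorm (p - xs) * vecNorm (p - xs) := by rw [hba]
set_option maxHeartbeats 4000000
theorem greedy_broyden_superlinear {n : ℕ} (hn : 2 ≤ n)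
    (F : (Fin n → ℝ) → (Fin n → ℝ))
    (J : (Fin n → ℝ) → Matrix (Fin n) (Fin n) ℝ)
    (hF : ∀ x, HasFDerivAt F (matCLM (J x)) x)
    (xs : Fin n → ℝ) (hxs : F xs = 0) (hJs : IsUnit (J xs))
    (c : ℝ) (hc : c = specNorm (J xs)⁻¹)
    (M : ℝ) (hM : 0 < M)
    (hLip : ∀ x, specNorm (J x - J xs) ≤ M * vecNorm (x - xs))
    (x : ℕ → (Fin n → ℝ)) (B : ℕ → Matrix (Fin n) (Fin n) ℝ) (idx : ℕ → Fin n)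
    (hBinv : ∀ k, IsUnit (B k))
    (hxrec : ∀ k, x (k + 1) = x k - (B k)⁻¹.mulVec (F (x k)))
    (hgreedy : ∀ k, ∀ i : Fin n,
      vecNorm ((B k - J (x (k + 1))).mulVec (Pi.single i 1))
        ≤ vecNorm ((B k - J (x (k + 1))).mulVec (Pi.single (idx k) 1)))
    (hBrec : ∀ k, B (k + 1) = broyd (B k) (J (x (k + 1))) (Pi.single (idx k) 1))
    (hinit : 48 * Real.sqrt n * c * M * vecNorm (x 0 - xs)
      + c * frobNorm (B 0 - J (x 0)) ≤ 1 / 3) :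
    ∀ k : ℕ, 1 ≤ k →
      vecNorm (x k - xs)
        ≤ Real.exp k * (1 - 1 / (n : ℝ)) ^ ((k : ℝ) * ((k : ℝ) - 1) / 4)
          * vecNorm (x 0 - xs) := by
  have hn0 : 0 < n := lt_of_lt_of_le (by norm_num) hn
  have hn2 : (2 : ℝ) ≤ (n : ℝ) := by exact_mod_cast hn
  have hnR : (0 : ℝ) < (n : ℝ) := by positivity
  have hinv : (1 : ℝ) / (n : ℝ) ≤ 1 / 2 := by
    apply div_le_div_of_nonneg_left (by norm_num) (by norm_num) hn2
  have ha : (0 : ℝ) < 1 - 1 / (n : ℝ) := by linarith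
  obtain ⟨a, haa⟩ : ∃ a : ℝ, a = 1 - 1 / (n : ℝ) := ⟨_, rfl⟩
  rw [← haa] at ha
  obtain ⟨τ, hτ⟩ : ∃ τ : ℝ, τ = Real.sqrt a := ⟨_, rfl⟩
  have hτ0 : 0 ≤ τ := hτ ▸ Real.sqrt_nonneg _
  have hτsq : τ ^ 2 = a := hτ ▸ Real.sq_sqrt ha.le
  have hinv0 : (0:ℝ) ≤ 1 / (n : ℝ) := by positivity
  have ha1 : a ≤ 1 := by rw [haa]; linarith
  have hτ1 : τ ≤ 1 := by nlinarith [sq_nonneg (τ - 1)]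
  have hτ23 : (2 : ℝ) / 3 ≤ τ := by
    rw [hτ, Real.le_sqrt (by norm_num : (0:ℝ) ≤ 2/3) ha.le]
    rw [haa]
    nlinarith
  have hc0 : 0 ≤ c := hc ▸ specNorm_nonneg hn0 _
  have hsn1 : (1 : ℝ) ≤ Real.sqrt n := by
    rw [show (1:ℝ) = Real.sqrt 1 from (Real.sqrt_one).symm]
    exact Real.sqrt_le_sqrt (by linarith)
  have hsn0 : (0 : ℝ) ≤ Real.sqrt n := Real.sqrt_nonneg _
  obtain ⟨r, hrdef⟩ : ∃ r : ℕ → ℝ, r = fun k => vecNorm (x k - xs) := ⟨_, rfl⟩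
  obtain ⟨σ, hσdef⟩ : ∃ σ : ℕ → ℝ, σ = fun k => frobNorm (B k - J xs) := ⟨_, rfl⟩
  obtain ⟨s, hsdef⟩ : ∃ s : ℕ → ℝ,
      s = fun k => c * σ k + 6 * Real.sqrt n * c * M * r k := ⟨_, rfl⟩
  have hrk : ∀ k, r k = vecNorm (x k - xs) := fun k => by rw [hrdef]
  have hσk : ∀ k, σ k = frobNorm (B k - J xs) := fun k => by rw [hσdef]
  have hsk : ∀ k, s k = c * σ k + 6 * Real.sqrt n * c * M * r k := fun k => by rw [hsdef]
  have hr0 : ∀ k, 0 ≤ r k := fun k => (hrk k) ▸ vecNorm_nonneg _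
  have hσ0 : ∀ k, 0 ≤ σ k := fun k => (hσk k) ▸ frobNorm_nonneg _
  have hJdet : IsUnit (J xs).det := (Matrix.isUnit_iff_isUnit_det _).mp hJs
  -- Step (A): error recursion
  have herr : ∀ k, (1 - c * σ k) * r (k + 1) ≤ c * σ k * r k + c * M * r k * r k := by
    intro k
    have hBdet : IsUnit (B k).det := (Matrix.isUnit_iff_isUnit_det _).mp (hBinv k)
    have hv' : x (k + 1) - xs = (x k - xs) - (B k)⁻¹.mulVec (F (x k)) := by
      rw [hxrec k]; abel
    have hBv : (B k).mulVec (x (k + 1) - xs)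
        = (B k - J xs).mulVec (x k - xs) + ((J xs).mulVec (x k - xs) - F (x k)) := by
      rw [hv', Matrix.mulVec_sub, Matrix.mulVec_mulVec, Matrix.mul_nonsing_inv _ hBdet,
        Matrix.one_mulVec, Matrix.sub_mulVec]
      abel
    have hup : vecNorm ((B k).mulVec (x (k + 1) - xs)) ≤ σ k * r k + M * r k * r k := by
      rw [hBv, hσk, hrk]
      apply le_trans (vecNorm_add_le _ _)
      apply add_le_add
      · exact vecNorm_mulVec_le_frob _ _
      · have h1 : vecNorm ((J xs).mulVec (x k - xs) - F (x k))
            = vecNorm (F (x k) - (J xs).mulVec (x k - xs)) := by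
          rw [← vecNorm_neg, neg_sub]
        rw [h1]
        exact mvt_bound F J hF xs hxs M hM hLip (x k)
    have hlow : (1 - c * σ k) * r (k + 1) ≤ c * vecNorm ((B k).mulVec (x (k + 1) - xs)) := by
      have h1 : vecNorm (x (k + 1) - xs)
          ≤ c * vecNorm ((J xs).mulVec (x (k + 1) - xs)) := by
        have he : x (k + 1) - xs = (J xs)⁻¹.mulVec ((J xs).mulVec (x (k + 1) - xs)) := by
          rw [Matrix.mulVec_mulVec, Matrix.nonsing_inv_mul _ hJdet, Matrix.one_mulVec]
        calc vecNorm (x (k + 1) - xs)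
            = vecNorm ((J xs)⁻¹.mulVec ((J xs).mulVec (x (k + 1) - xs))) := by rw [← he]
          _ ≤ specNorm (J xs)⁻¹ * vecNorm ((J xs).mulVec (x (k + 1) - xs)) :=
              vecNorm_mulVec_le_spec _ _
          _ = c * vecNorm ((J xs).mulVec (x (k + 1) - xs)) := by rw [hc]
      have h2 : vecNorm ((J xs).mulVec (x (k + 1) - xs))
          ≤ vecNorm ((B k).mulVec (x (k + 1) - xs)) + σ k * vecNorm (x (k + 1) - xs) := by
        have he : (J xs).mulVec (x (k + 1) - xs)
            = (B k).mulVec (x (k + 1) - xs) + (J xs - B k).mulVec (x (k + 1) - xs) := by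
          rw [Matrix.sub_mulVec]; abel
        rw [he]
        apply le_trans (vecNorm_add_le _ _)
        apply add_le_add_right
        calc vecNorm ((J xs - B k).mulVec (x (k + 1) - xs))
            ≤ frobNorm (J xs - B k) * vecNorm (x (k + 1) - xs) := vecNorm_mulVec_le_frob _ _
          _ = σ k * vecNorm (x (k + 1) - xs) := by rw [frobNorm_sub_rev, ← hσk]
      rw [hrk]
      nlinarith [mul_le_mul_of_nonneg_left h2 hc0, vecNorm_nonneg (x (k + 1) - xs)]
    have hfin := le_trans hlow (mul_le_mul_of_nonneg_left hup hc0)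
    nlinarith [hfin]
  -- Step (B): sigma recursion
  have hσrec : ∀ k, σ (k + 1) ≤ τ * σ k + 2 * Real.sqrt n * M * r (k + 1) := by
    intro k
    have hsq : ∀ j, ∑ p, (B k - J (x (k + 1))) p j ^ 2
        ≤ ∑ p, (B k - J (x (k + 1))) p (idx k) ^ 2 := by
      intro j
      have h1 := hgreedy k j
      have h2 : vecNorm ((B k - J (x (k + 1))).mulVec (Pi.single j 1)) ^ 2
          = ∑ p, (B k - J (x (k + 1))) p j ^ 2 := by
        rw [sq_vecNorm, colVec_single]
      have h3 : vecNorm ((B k - J (x (k + 1))).mulVec (Pi.single (idx k) 1)) ^ 2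
          = ∑ p, (B k - J (x (k + 1))) p (idx k) ^ 2 := by
        rw [sq_vecNorm, colVec_single]
      rw [← h2, ← h3]
      exact pow_le_pow_left₀ (vecNorm_nonneg _) h1 2
    have hfg : frobNorm (B k - J (x (k + 1))) ^ 2
        ≤ n * ∑ p, (B k - J (x (k + 1))) p (idx k) ^ 2 := by
      rw [sq_frobNorm, Finset.sum_comm]
      calc (∑ j, ∑ p, (B k - J (x (k + 1))) p j ^ 2)
          ≤ ∑ _j : Fin n, ∑ p, (B k - J (x (k + 1))) p (idx k) ^ 2 :=
            Finset.sum_le_sum fun j _ => hsq j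
        _ = n * ∑ p, (B k - J (x (k + 1))) p (idx k) ^ 2 := by
            rw [Finset.sum_const, Finset.card_univ, Fintype.card_fin, nsmul_eq_mul]
    have hkey : frobNorm (B (k + 1) - J (x (k + 1))) ^ 2
        ≤ a * frobNorm (B k - J (x (k + 1))) ^ 2 := by
      rw [hBrec k, broyd_frob_sq]
      have hd : frobNorm (B k - J (x (k + 1))) ^ 2 / (n : ℝ)
          ≤ ∑ p, (B k - J (x (k + 1))) p (idx k) ^ 2 :=
        (div_le_iff₀ hnR).mpr (by linarith [hfg])
      have he : a * frobNorm (B k - J (x (k + 1))) ^ 2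
          = frobNorm (B k - J (x (k + 1))) ^ 2
            - frobNorm (B k - J (x (k + 1))) ^ 2 / (n : ℝ) := by
        rw [haa]; ring
      rw [he]
      linarith
    have hcontr : frobNorm (B (k + 1) - J (x (k + 1)))
        ≤ τ * frobNorm (B k - J (x (k + 1))) := by
      have h1 := Real.sqrt_le_sqrt hkey
      rw [Real.sqrt_sq (frobNorm_nonneg _), Real.sqrt_mul ha.le,
        Real.sqrt_sq (frobNorm_nonneg _), ← hτ] at h1
      exact h1
    have hJA : frobNorm (J (x (k + 1)) - J xs) ≤ Real.sqrt n * (M * r (k + 1)) := by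
      rw [hrk]
      apply le_trans (frobNorm_le_sqrt_n_specNorm hn0 _)
      exact mul_le_mul_of_nonneg_left (hLip _) hsn0
    have ht1 : σ (k + 1) ≤ frobNorm (B (k + 1) - J (x (k + 1)))
        + frobNorm (J (x (k + 1)) - J xs) := by
      rw [hσk]
      exact frobNorm_triangle _ _ _
    have ht2 : frobNorm (B k - J (x (k + 1))) ≤ σ k + frobNorm (J (x (k + 1)) - J xs) := by
      rw [hσk]
      have h := frobNorm_triangle (B k) (J xs) (J (x (k + 1)))
      rw [frobNorm_sub_rev (J xs) (J (x (k + 1)))] at h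
      exact h
    have hJA0 : 0 ≤ frobNorm (J (x (k + 1)) - J xs) := frobNorm_nonneg _
    nlinarith [mul_le_mul_of_nonneg_left ht2 hτ0]
  -- base case for s
  have hs0 : s 0 ≤ 1 / 3 := by
    have hσ0b : σ 0 ≤ frobNorm (B 0 - J (x 0)) + Real.sqrt n * (M * r 0) := by
      rw [hσk, hrk]
      apply le_trans (frobNorm_triangle (B 0) (J (x 0)) (J xs))
      apply add_le_add_right
      apply le_trans (frobNorm_le_sqrt_n_specNorm hn0 _)
      exact mul_le_mul_of_nonneg_left (hLip _) hsn0
    have h1 := mul_le_mul_of_nonneg_left hσ0b hc0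
    have h2 : (0 : ℝ) ≤ Real.sqrt n * c * M * r 0 := by
      apply mul_nonneg (mul_nonneg (mul_nonneg hsn0 hc0) hM.le) (hr0 0)
    rw [hsk]
    rw [hrk] at h1 h2 ⊢
    nlinarith [hinit]
  -- step lemma
  have hstep : ∀ k, s k ≤ 1 / 3 → r (k + 1) ≤ (3 / 2) * s k * r k ∧ s (k + 1) ≤ τ * s k := by
    intro k hske
    have h6 : (0 : ℝ) ≤ Real.sqrt n * c * M := mul_nonneg (mul_nonneg hsn0 hc0) hM.le
    have hcσ : c * σ k ≤ s k := by
      rw [hsk]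
      nlinarith [mul_nonneg h6 (hr0 k)]
    have hcσ3 : c * σ k ≤ 1 / 3 := le_trans hcσ hske
    have hcσ0 : 0 ≤ c * σ k := mul_nonneg hc0 (hσ0 k)
    have hA := herr k
    have hnum : c * σ k * r k + c * M * r k * r k ≤ s k * r k := by
      rw [hsk]
      have h7 : c * M * r k * r k ≤ 6 * Real.sqrt n * c * M * r k * r k := by
        nlinarith [mul_nonneg (mul_nonneg hc0 hM.le) (mul_nonneg (hr0 k) (hr0 k))]
      nlinarith
    have hr1 : r (k + 1) ≤ (3 / 2) * s k * r k := by
      nlinarith [hA, hnum, hr0 (k + 1)]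
    have hsk0 : 0 ≤ s k := by
      rw [hsk]
      exact add_nonneg hcσ0 (by nlinarith [mul_nonneg h6 (hr0 k)])
    have hrhalf : r (k + 1) ≤ (1 / 2) * r k := by
      nlinarith [hr0 k]
    refine ⟨hr1, ?_⟩
    have hB := hσrec k
    have h1 : c * σ (k + 1) ≤ τ * (c * σ k) + 2 * (Real.sqrt n * c * M) * r (k + 1) := by
      nlinarith [mul_le_mul_of_nonneg_left hB hc0]
    have h2 : 8 * (Real.sqrt n * c * M) * r (k + 1) ≤ 4 * (Real.sqrt n * c * M) * r k := by
      nlinarith [mul_le_mul_of_nonneg_left hrhalf h6]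
    have h3 : 4 * (Real.sqrt n * c * M) * r k ≤ τ * (6 * (Real.sqrt n * c * M) * r k) := by
      nlinarith [mul_nonneg h6 (hr0 k), hτ23]
    rw [hsk (k + 1), hsk k]
    nlinarith [h1, h2, h3]
  -- induction: s k ≤ (1/3) * τ^k
  have hQ : ∀ k, s k ≤ (1 / 3) * τ ^ k := by
    intro k
    induction k with
    | zero => simpa using hs0
    | succ k ih =>
      have hτk1 : τ ^ k ≤ 1 := pow_le_one₀ hτ0 hτ1
      have hske : s k ≤ 1 / 3 := by nlinarith
      calc s (k + 1) ≤ τ * s k := (hstep k hske).2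
        _ ≤ τ * ((1 / 3) * τ ^ k) := mul_le_mul_of_nonneg_left ih hτ0
        _ = (1 / 3) * τ ^ (k + 1) := by ring
  -- rate
  have hrate : ∀ k : ℕ, r k ≤ a ^ ((k : ℝ) * ((k : ℝ) - 1) / 4) * r 0 := by
    intro k
    induction k with
    | zero =>
      simp only [Nat.cast_zero, zero_mul, zero_div, Real.rpow_zero, one_mul]
      exact le_refl _
    | succ k ih =>
      have hτk1 : τ ^ k ≤ 1 := pow_le_one₀ hτ0 hτ1
      have hQk := hQ k
      have hske : s k ≤ 1 / 3 := by nlinarith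
      have hr1 := (hstep k hske).1
      have h2 : r (k + 1) ≤ τ ^ k * r k := by
        have h3 : (3 / 2) * s k ≤ (3 / 2) * ((1 / 3) * τ ^ k) := by nlinarith
        nlinarith [hr0 k, mul_le_mul_of_nonneg_right h3 (hr0 k), pow_nonneg hτ0 k]
      have hτpow : τ ^ k = a ^ ((k : ℝ) / 2) := by
        rw [hτ, Real.sqrt_eq_rpow]
        rw [← Real.rpow_natCast (a ^ ((1:ℝ)/2)) k, ← Real.rpow_mul ha.le]
        congr 1
        ring
      calc r (k + 1) ≤ τ ^ k * r k := h2
        _ ≤ τ ^ k * (a ^ ((k : ℝ) * ((k : ℝ) - 1) / 4) * r 0) :=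
            mul_le_mul_of_nonneg_left ih (pow_nonneg hτ0 k)
        _ = a ^ ((k : ℝ) / 2) * a ^ ((k : ℝ) * ((k : ℝ) - 1) / 4) * r 0 := by
            rw [hτpow]; ring
        _ = a ^ ((k : ℝ) / 2 + (k : ℝ) * ((k : ℝ) - 1) / 4) * r 0 := by
            rw [Real.rpow_add ha]
        _ = a ^ ((((k : ℕ) + 1 : ℕ) : ℝ) * ((((k : ℕ) + 1 : ℕ) : ℝ) - 1) / 4) * r 0 := by
            congr 2
            push_cast
            ring
  intro k _
  have h1 := hrate k
  have h2 : (1 : ℝ) ≤ Real.exp k := Real.one_le_exp (Nat.cast_nonneg k)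
  have h3 : 0 ≤ a ^ ((k : ℝ) * ((k : ℝ) - 1) / 4) := Real.rpow_nonneg ha.le _
  rw [hrk k, hrk 0] at h1
  calc vecNorm (x k - xs)
      ≤ a ^ ((k : ℝ) * ((k : ℝ) - 1) / 4) * vecNorm (x 0 - xs) := h1
    _ ≤ Real.exp k * (a ^ ((k : ℝ) * ((k : ℝ) - 1) / 4)) * vecNorm (x 0 - xs) := by
        nlinarith [vecNorm_nonneg (x 0 - xs), mul_nonneg h3 (vecNorm_nonneg (x 0 - xs))]
    _ = Real.exp k * (1 - 1 / (n : ℝ)) ^ ((k : ℝ) * ((k : ℝ) - 1) / 4)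
          * vecNorm (x 0 - xs) := by rw [haa]
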